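/- Let δ₁, δ_{2,3} ∈ (0,1], 0 < θ < min{δ₁, δ_{2,3}}, and set δ₀ := min{θ, δ₁ - θ, δ_{2,3} - θ}. Then for every real A ≥ 1, the sum over integers k₂ ≥ k₁ ≥ 0 and integers j₁, j₂, j₃ ≥ 1 with j₃ ≥ A of 2^{-k₁δ₁} · j₁^{-1-δ₁} · j₂^{-1} · j₃^{-1} · (2^{-k₂} j₂^{-1} + 2^{k₁-k₂} j₃^{-1})^{δ_{2,3}} / (2^{k₁} j₁ j₂ j₃^{-1} + 2^{-k₁} j₁^{-1} j₂^{-1} j₃)^{θ} is bounded by a constant (depending only on δ₁, δ_{2,3}, θ) times A^{-δ₀}. -/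

import Mathlib

open scoped ENNReal

namespace Stmt4Aux

lemma bern {v ε : ℝ} (hv0 : 0 ≤ v) (hv1 : v < 1) (hε0 : 0 ≤ ε) (hε1 : ε ≤ 1) :
    1 + ε * v ≤ (1 - v) ^ (-ε) := by
  have h1 : (0:ℝ) < 1 - v := by linarith
  have h2 : (1 - v) ^ ε ≤ 1 - ε * v := by
    have h := rpow_one_add_le_one_add_mul_self (s := -v) (by linarith) hε0 hε1
    rw [show (1:ℝ) + -v = 1 - v by ring] at h
    linarith [h]
  have h3 : 0 < (1 - v) ^ ε := Real.rpow_pos_of_pos h1 _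
  rw [Real.rpow_neg h1.le, ← one_div, le_div_iff₀ h3]
  nlinarith [mul_nonneg (mul_nonneg hε0 hv0) (mul_nonneg hε0 hv0)]

lemma key {ε : ℝ} (hε0 : 0 < ε) (hε1 : ε ≤ 1) {x : ℝ} (hx : 2 ≤ x) :
    ε * x ^ (-(1+ε)) ≤ (x-1) ^ (-ε) - x ^ (-ε) := by
  have hx0 : (0:ℝ) < x := by linarith
  have hv0 : 0 ≤ 1/x := by positivity
  have hv1 : 1/x < 1 := by rw [div_lt_one hx0]; linarith
  have hb := bern hv0 hv1 hε0.le hε1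
  have hxe : 0 < x ^ (-ε) := Real.rpow_pos_of_pos hx0 _
  have hsplit : (x - 1) ^ (-ε) = x ^ (-ε) * (1 - 1/x) ^ (-ε) := by
    rw [← Real.mul_rpow hx0.le (by nlinarith [hv1] : (0:ℝ) ≤ 1 - 1/x)]
    congr 1
    field_simp
  have hxx : x ^ (-(1+ε)) = x ^ (-ε) * (1/x) := by
    rw [show -(1+ε) = -ε + (-1) by ring, Real.rpow_add hx0, Real.rpow_neg_one, one_div]
  calc ε * x^(-(1+ε)) = x^(-ε) * (ε * (1/x)) := by rw [hxx]; ring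
    _ ≤ x^(-ε) * ((1 - 1/x)^(-ε) - 1) := by
        apply mul_le_mul_of_nonneg_left _ hxe.le
        linarith [hb]
    _ = (x-1)^(-ε) - x^(-ε) := by rw [hsplit]; ring

lemma sum_Ico_le {ε : ℝ} (hε0 : 0 < ε) (hε1 : ε ≤ 1) (N : ℕ) (hN : 1 ≤ N) (M : ℕ) :
    ∑ n ∈ Finset.Ico (N+1) M, ((n:ℝ)) ^ (-(1+ε))
      ≤ (1/ε) * ((N:ℝ) ^ (-ε) - ((max N (M-1) : ℕ):ℝ) ^ (-ε)) := by
  induction M with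
  | zero => simp
  | succ M ih =>
    rcases le_or_gt (M+1) (N+1) with h | h
    · have hM : M ≤ N := by omega
      rw [Finset.Ico_eq_empty (by omega), Nat.max_eq_left (by omega : M + 1 - 1 ≤ N)]
      simp
    · have hMN : N + 1 ≤ M := by omega
      rw [Finset.sum_Ico_succ_top hMN]
      have h2 : (2:ℝ) ≤ (M:ℝ) := by exact_mod_cast (by omega : 2 ≤ M)
      have hkey := key hε0 hε1 h2
      have hcast : ((M - 1 : ℕ):ℝ) = (M:ℝ) - 1 := by
        push_cast [Nat.cast_sub (by omega : 1 ≤ M)]; ring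
      rw [Nat.max_eq_right (by omega : N ≤ M - 1), hcast] at ih
      rw [Nat.max_eq_right (by omega : N ≤ M + 1 - 1), show M + 1 - 1 = M from rfl]
      have h3 : (M:ℝ) ^ (-(1+ε)) ≤ (1/ε) * (((M:ℝ)-1) ^ (-ε) - (M:ℝ) ^ (-ε)) := by
        rw [one_div_mul_eq_div, le_div_iff₀' hε0]
        exact hkey
      rw [mul_sub] at ih h3 ⊢
      linarith [ih, h3]

lemma sum_Ico_le' {ε : ℝ} (hε0 : 0 < ε) (hε1 : ε ≤ 1) (N : ℕ) (hN : 1 ≤ N) (M : ℕ) :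
    ∑ n ∈ Finset.Ico N M, ((n:ℝ)) ^ (-(1+ε)) ≤ (1 + 1/ε) * (N:ℝ) ^ (-ε) := by
  have hNR : (1:ℝ) ≤ (N:ℝ) := by exact_mod_cast hN
  have hpos : (0:ℝ) < (N:ℝ) ^ (-ε) := Real.rpow_pos_of_pos (by linarith) _
  rcases le_or_gt M N with h | h
  · rw [Finset.Ico_eq_empty (by omega)]
    simp only [Finset.sum_empty]
    positivity
  · rw [← Finset.insert_Ico_add_one_left_eq_Ico h, Finset.sum_insert (by simp)]
    have h1 := sum_Ico_le hε0 hε1 N hN M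
    have h2 : (N:ℝ)^(-(1+ε)) ≤ (N:ℝ)^(-ε) :=
      Real.rpow_le_rpow_of_exponent_le hNR (by linarith)
    have h3 : 0 ≤ (1/ε) * ((max N (M-1):ℕ):ℝ)^(-ε) := by positivity
    rw [mul_sub] at h1
    have hε' : (0:ℝ) ≤ 1/ε := by positivity
    nlinarith [h1, h2, h3]

noncomputable def W (p A : ℝ) (n : ℕ) : ℝ≥0∞ := if A ≤ (n:ℝ) then ((n:ℝ≥0∞))^(-(1+p)) else 0

lemma tsum_W_le {ε : ℝ} (hε0 : 0 < ε) (hε1 : ε ≤ 1) (A : ℝ) (hA : 1 ≤ A) :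
    ∑' n, W ε A n ≤ ENNReal.ofReal (1 + 1/ε) * (ENNReal.ofReal A) ^ (-ε) := by
  have hA0 : 0 < A := by linarith
  set N := ⌈A⌉₊ with hNdef
  have hN1 : 1 ≤ N := Nat.one_le_ceil_iff.2 hA0
  have hAN : A ≤ (N:ℝ) := Nat.le_ceil A
  have main : ∑' n, W ε A n ≤ ENNReal.ofReal ((1 + 1/ε) * (N:ℝ)^(-ε)) := by
    apply Summable.tsum_le_of_sum_le ENNReal.summable
    intro s
    obtain ⟨M, hM⟩ : ∃ M, ∀ n ∈ s, n < M :=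
      ⟨(s.sup id) + 1, fun n hn => Nat.lt_succ_of_le (Finset.le_sup (f := id) hn)⟩
    calc ∑ n ∈ s, W ε A n
        = ∑ n ∈ s.filter (fun n => N ≤ n), W ε A n := by
          rw [Finset.sum_filter_of_ne]
          intro n hn hne
          have : A ≤ (n:ℝ) := by
            by_contra hc
            exact hne (by simp [W, hc])
          exact Nat.ceil_le.2 this
      _ ≤ ∑ n ∈ Finset.Ico N M, W ε A n := by
          apply Finset.sum_le_sum_of_subset
          intro n hn
          rw [Finset.mem_filter] at hn
          exact Finset.mem_Ico.2 ⟨hn.2, hM n hn.1⟩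
      _ ≤ ∑ n ∈ Finset.Ico N M, ((n:ℝ≥0∞))^(-(1+ε)) := by
          apply Finset.sum_le_sum
          intro n _
          unfold W
          split <;> simp
      _ = ENNReal.ofReal (∑ n ∈ Finset.Ico N M, ((n:ℝ))^(-(1+ε))) := by
          rw [ENNReal.ofReal_sum_of_nonneg]
          · apply Finset.sum_congr rfl
            intro n hn
            have hn1 : 1 ≤ n := le_trans hN1 (Finset.mem_Ico.1 hn).1
            have : (0:ℝ) < n := by exact_mod_cast hn1
            rw [← ENNReal.ofReal_natCast n, ENNReal.ofReal_rpow_of_pos this]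
          · intro n hn
            have hn1 : 1 ≤ n := le_trans hN1 (Finset.mem_Ico.1 hn).1
            have : (0:ℝ) < n := by exact_mod_cast hn1
            positivity
      _ ≤ _ := ENNReal.ofReal_le_ofReal (sum_Ico_le' hε0 hε1 N hN1 M)
  refine main.trans ?_
  have h1 : (N:ℝ)^(-ε) ≤ A^(-ε) := by
    rw [Real.rpow_neg (by positivity), Real.rpow_neg hA0.le]
    exact inv_anti₀ (Real.rpow_pos_of_pos hA0 _) (Real.rpow_le_rpow hA0.le hAN hε0.le)
  calc ENNReal.ofReal ((1 + 1/ε) * (N:ℝ)^(-ε))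
      ≤ ENNReal.ofReal ((1 + 1/ε) * A^(-ε)) := by
        apply ENNReal.ofReal_le_ofReal
        apply mul_le_mul_of_nonneg_left h1 (by positivity)
    _ = ENNReal.ofReal (1 + 1/ε) * (ENNReal.ofReal A) ^ (-ε) := by
        rw [ENNReal.ofReal_mul (by positivity), ENNReal.ofReal_rpow_of_pos hA0]

lemma W_mono {p p' : ℝ} (hpp : p' ≤ p) (A : ℝ) (hA : 1 ≤ A) (n : ℕ) : W p A n ≤ W p' A n := by
  unfold W
  split
  · next h =>
    apply ENNReal.rpow_le_rpow_of_exponent_le _ (by linarith)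
    have : (1:ℝ) ≤ (n:ℝ) := le_trans hA h
    exact_mod_cast this
  · exact le_refl _
lemma tsum_W_ne_top {p : ℝ} (hp : 0 < p) : ∑' n, W p 1 n ≠ ⊤ := by
  have h0 : 0 < min p 1 := lt_min hp one_pos
  have h1 : ∑' n, W p 1 n ≤ ENNReal.ofReal (1 + 1/(min p 1)) := by
    calc ∑' n, W p 1 n ≤ ∑' n, W (min p 1) 1 n :=
          ENNReal.tsum_le_tsum (fun n => W_mono (min_le_left _ _) 1 le_rfl n)
      _ ≤ ENNReal.ofReal (1 + 1/(min p 1)) * (ENNReal.ofReal 1) ^ (-(min p 1)) :=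
          tsum_W_le h0 (min_le_right _ _) 1 le_rfl
      _ = _ := by simp
  exact ne_top_of_le_ne_top ENNReal.ofReal_ne_top h1

lemma geom_ne_top {c : ℝ} (hc : 0 < c) : (∑' k:ℕ, (2:ℝ≥0∞)^(-(k:ℝ)*c)) ≠ ⊤ := by
  have h : ∀ k:ℕ, (2:ℝ≥0∞)^(-(k:ℝ)*c) = ((2:ℝ≥0∞)^(-c))^k := by
    intro k
    rw [← ENNReal.rpow_natCast ((2:ℝ≥0∞)^(-c)) k, ← ENNReal.rpow_mul]
    congr 1; ring
  rw [tsum_congr h, ENNReal.tsum_geometric]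
  have hr : (2:ℝ≥0∞)^(-c) < 1 :=
    ENNReal.rpow_lt_one_of_one_lt_of_neg (by norm_num) (by linarith)
  exact ENNReal.inv_ne_top.2 (tsub_pos_of_lt hr).ne'

lemma ksum (k₁ : ℕ) (d : ℝ) :
    (∑' k₂:ℕ, if k₁ ≤ k₂ then (2:ℝ≥0∞)^(((k₁:ℝ)-(k₂:ℝ))*d) else 0)
      = ∑' m:ℕ, (2:ℝ≥0∞)^(-(m:ℝ)*d) := by
  rw [← Function.Injective.tsum_eq (g := fun m : ℕ => k₁ + m) (add_right_injective k₁)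
      (f := fun k₂ => if k₁ ≤ k₂ then (2:ℝ≥0∞)^(((k₁:ℝ)-(k₂:ℝ))*d) else 0) ?_]
  · apply tsum_congr; intro m
    rw [if_pos (Nat.le_add_right _ _)]
    congr 1; push_cast; ring
  · intro x hx
    rw [Function.mem_support] at hx
    rcases le_or_gt k₁ x with h | h
    · exact ⟨x - k₁, show k₁ + (x - k₁) = x by omega⟩
    · exact absurd (if_neg (by omega)) hx
lemma rpow_fin {x : ℝ≥0∞} (h0 : x ≠ 0) (ht : x ≠ ⊤) (y : ℝ) : x ^ y ≠ ⊤ := by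
  simp [ENNReal.rpow_eq_top_iff, h0, ht]

lemma pointwise {δ₁ δ₂₃ θ : ℝ} (hδ₂₃0 : 0 < δ₂₃) (hδ₂₃1 : δ₂₃ ≤ 1)
    (hθ0 : 0 < θ) (k₁ k₂ j₁ j₂ j₃ : ℕ) (h₁ : 1 ≤ j₁) (h₂ : 1 ≤ j₂) (h₃ : 1 ≤ j₃) :
    (2 : ℝ≥0∞) ^ (-(k₁ : ℝ) * δ₁) * ((j₁ : ℝ≥0∞)) ^ (-(1 + δ₁)) *
      ((j₂ : ℝ≥0∞))⁻¹ * ((j₃ : ℝ≥0∞))⁻¹ *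
      ((2 : ℝ≥0∞) ^ (-(k₂ : ℝ)) * ((j₂ : ℝ≥0∞))⁻¹ +
          (2 : ℝ≥0∞) ^ ((k₁ : ℝ) - (k₂ : ℝ)) * ((j₃ : ℝ≥0∞))⁻¹) ^ δ₂₃ /
      ((2 : ℝ≥0∞) ^ ((k₁ : ℝ)) * (j₁ : ℝ≥0∞) * (j₂ : ℝ≥0∞) * ((j₃ : ℝ≥0∞))⁻¹ +
          (2 : ℝ≥0∞) ^ (-(k₁ : ℝ)) * ((j₁ : ℝ≥0∞))⁻¹ * ((j₂ : ℝ≥0∞))⁻¹ * (j₃ : ℝ≥0∞)) ^ θ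
    ≤ (2:ℝ≥0∞)^(((k₁:ℝ)-(k₂:ℝ))*δ₂₃) *
      ((2:ℝ≥0∞)^(-(k₁:ℝ)*(δ₁-θ)) * (j₁:ℝ≥0∞)^(-(1+(δ₁-θ))) * (j₂:ℝ≥0∞)^(-(1+(δ₂₃-θ))) *
          (j₃:ℝ≥0∞)^(-(1+θ))
       + (2:ℝ≥0∞)^(-(k₁:ℝ)*(δ₁+θ)) * (j₁:ℝ≥0∞)^(-(1+(δ₁+θ))) * (j₂:ℝ≥0∞)^(-(1+θ)) *
          (j₃:ℝ≥0∞)^(-(1+(δ₂₃-θ)))) := by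
  set p : ℝ≥0∞ := (j₁ : ℝ≥0∞) with hpdef
  set q : ℝ≥0∞ := (j₂ : ℝ≥0∞) with hqdef
  set r : ℝ≥0∞ := (j₃ : ℝ≥0∞) with hrdef
  have hp0 : p ≠ 0 := by simp [hpdef]; omega
  have hq0 : q ≠ 0 := by simp [hqdef]; omega
  have hr0 : r ≠ 0 := by simp [hrdef]; omega
  have hpt : p ≠ ⊤ := ENNReal.natCast_ne_top _
  have hqt : q ≠ ⊤ := ENNReal.natCast_ne_top _
  have hrt : r ≠ ⊤ := ENNReal.natCast_ne_top _
  have h20 : (2:ℝ≥0∞) ≠ 0 := two_ne_zero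
  have h2t : (2:ℝ≥0∞) ≠ ⊤ := ENNReal.ofNat_ne_top
  set f : ℝ → ℝ → ℝ → ℝ → ℝ≥0∞ := fun a b c d => 2^a * p^b * q^c * r^d with hfdef
  have fmul : ∀ a b c d a' b' c' d' : ℝ,
      f a b c d * f a' b' c' d' = f (a+a') (b+b') (c+c') (d+d') := by
    intro a b c d a' b' c' d'
    simp only [hfdef, ENNReal.rpow_add _ _ h20 h2t, ENNReal.rpow_add _ _ hp0 hpt,
      ENNReal.rpow_add _ _ hq0 hqt, ENNReal.rpow_add _ _ hr0 hrt]
    ring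
  have frpow : ∀ a b c d e : ℝ, (f a b c d)^e = f (a*e) (b*e) (c*e) (d*e) := by
    intro a b c d e
    simp only [hfdef]
    rw [ENNReal.mul_rpow_of_ne_top
          (ENNReal.mul_ne_top (ENNReal.mul_ne_top (rpow_fin h20 h2t a) (rpow_fin hp0 hpt b))
            (rpow_fin hq0 hqt c)) (rpow_fin hr0 hrt d),
        ENNReal.mul_rpow_of_ne_top
          (ENNReal.mul_ne_top (rpow_fin h20 h2t a) (rpow_fin hp0 hpt b)) (rpow_fin hq0 hqt c),
        ENNReal.mul_rpow_of_ne_top (rpow_fin h20 h2t a) (rpow_fin hp0 hpt b),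
        ← ENNReal.rpow_mul, ← ENNReal.rpow_mul, ← ENNReal.rpow_mul, ← ENNReal.rpow_mul]
  -- abbreviations
  set P : ℝ≥0∞ := 2 ^ (-(k₁ : ℝ) * δ₁) * p ^ (-(1 + δ₁)) * q⁻¹ * r⁻¹ with hPdef
  set D : ℝ≥0∞ := 2 ^ ((k₁ : ℝ)) * p * q * r⁻¹ + 2 ^ (-(k₁ : ℝ)) * p⁻¹ * q⁻¹ * r with hDdef
  have hP : P = f (-(k₁:ℝ)*δ₁) (-(1+δ₁)) (-1) (-1) := by
    simp only [hPdef, hfdef, ENNReal.rpow_neg_one]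
  -- Step 1 : bound on X ^ δ₂₃
  have hX : ((2:ℝ≥0∞) ^ (-(k₂:ℝ)) * q⁻¹ + (2:ℝ≥0∞) ^ ((k₁:ℝ) - (k₂:ℝ)) * r⁻¹) ^ δ₂₃
      ≤ 2^(((k₁:ℝ)-(k₂:ℝ))*δ₂₃) * (q^(-δ₂₃) + r^(-δ₂₃)) := by
    have hk0 : (0:ℝ) ≤ (k₁:ℝ) := Nat.cast_nonneg _
    have h1 : (2:ℝ≥0∞)^(-(k₂:ℝ)) ≤ 2^((k₁:ℝ)-(k₂:ℝ)) :=
      ENNReal.rpow_le_rpow_of_exponent_le one_le_two (by linarith)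
    calc ((2:ℝ≥0∞) ^ (-(k₂:ℝ)) * q⁻¹ + (2:ℝ≥0∞) ^ ((k₁:ℝ) - (k₂:ℝ)) * r⁻¹) ^ δ₂₃
        ≤ ((2:ℝ≥0∞)^((k₁:ℝ)-(k₂:ℝ)) * (q⁻¹ + r⁻¹)) ^ δ₂₃ := by
          apply ENNReal.rpow_le_rpow _ hδ₂₃0.le
          rw [mul_add]
          exact add_le_add (mul_le_mul_left h1 _) le_rfl
      _ = ((2:ℝ≥0∞)^((k₁:ℝ)-(k₂:ℝ)))^δ₂₃ * (q⁻¹ + r⁻¹)^δ₂₃ :=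
          ENNReal.mul_rpow_of_ne_top (rpow_fin h20 h2t _)
            (ENNReal.add_ne_top.2 ⟨ENNReal.inv_ne_top.2 hq0, ENNReal.inv_ne_top.2 hr0⟩) _
      _ ≤ 2^(((k₁:ℝ)-(k₂:ℝ))*δ₂₃) * ((q⁻¹)^δ₂₃ + (r⁻¹)^δ₂₃) := by
          rw [← ENNReal.rpow_mul]
          exact mul_le_mul_right (ENNReal.rpow_add_le_add_rpow _ _ hδ₂₃0.le hδ₂₃1) _
      _ = 2^(((k₁:ℝ)-(k₂:ℝ))*δ₂₃) * (q^(-δ₂₃) + r^(-δ₂₃)) := by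
          rw [ENNReal.inv_rpow, ENNReal.inv_rpow, ← ENNReal.rpow_neg, ← ENNReal.rpow_neg]
  -- Step 2 : division bounds
  have hdiv : ∀ (a E : ℝ≥0∞), E ≤ D → a / D^θ ≤ a * E^(-θ) := by
    intro a E hE
    rw [div_eq_mul_inv, ENNReal.rpow_neg]
    exact mul_le_mul_right (ENNReal.inv_le_inv' (ENNReal.rpow_le_rpow hE hθ0.le)) a
  have hE₁ : (2:ℝ≥0∞) ^ (-(k₁:ℝ)) * p⁻¹ * q⁻¹ * r ≤ D := le_add_self
  have hE₂ : (2:ℝ≥0∞) ^ ((k₁:ℝ)) * p * q * r⁻¹ ≤ D := le_self_add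
  calc P * ((2:ℝ≥0∞) ^ (-(k₂:ℝ)) * q⁻¹ + (2:ℝ≥0∞) ^ ((k₁:ℝ) - (k₂:ℝ)) * r⁻¹) ^ δ₂₃ / D ^ θ
      ≤ P * (2^(((k₁:ℝ)-(k₂:ℝ))*δ₂₃) * (q^(-δ₂₃) + r^(-δ₂₃))) / D ^ θ := by
        simp only [div_eq_mul_inv]
        exact mul_le_mul_left (mul_le_mul_right hX _) _
    _ = 2^(((k₁:ℝ)-(k₂:ℝ))*δ₂₃) * (P * q^(-δ₂₃) / D^θ + P * r^(-δ₂₃) / D^θ) := by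
        simp only [div_eq_mul_inv]; ring
    _ ≤ 2^(((k₁:ℝ)-(k₂:ℝ))*δ₂₃) *
          (P * q^(-δ₂₃) * ((2:ℝ≥0∞) ^ (-(k₁:ℝ)) * p⁻¹ * q⁻¹ * r)^(-θ)
           + P * r^(-δ₂₃) * ((2:ℝ≥0∞) ^ ((k₁:ℝ)) * p * q * r⁻¹)^(-θ)) :=
        mul_le_mul_right (add_le_add (hdiv _ _ hE₁) (hdiv _ _ hE₂)) _
    _ = _ := by
        have hA : (2:ℝ≥0∞) ^ (-(k₁:ℝ)) * p⁻¹ * q⁻¹ * r = f (-(k₁:ℝ)) (-1) (-1) 1 := by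
          simp only [hfdef, ENNReal.rpow_neg_one, ENNReal.rpow_one]
        have hB : (2:ℝ≥0∞) ^ ((k₁:ℝ)) * p * q * r⁻¹ = f ((k₁:ℝ)) 1 1 (-1) := by
          simp only [hfdef, ENNReal.rpow_neg_one, ENNReal.rpow_one]
        have hq' : q^(-δ₂₃) = f 0 0 (-δ₂₃) 0 := by
          simp only [hfdef, ENNReal.rpow_zero]; ring
        have hr' : r^(-δ₂₃) = f 0 0 0 (-δ₂₃) := by
          simp only [hfdef, ENNReal.rpow_zero]; ring
        rw [hA, hB, hP, hq', hr', frpow, frpow, fmul, fmul, fmul, fmul]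
        have e1 : f (-(k₁:ℝ)*(δ₁-θ)) (-(1+(δ₁-θ))) (-(1+(δ₂₃-θ))) (-(1+θ)) =
            (2:ℝ≥0∞)^(-(k₁:ℝ)*(δ₁-θ)) * (j₁:ℝ≥0∞)^(-(1+(δ₁-θ))) * (j₂:ℝ≥0∞)^(-(1+(δ₂₃-θ))) *
              (j₃:ℝ≥0∞)^(-(1+θ)) := by simp only [hfdef, hpdef, hqdef, hrdef]
        have e2 : f (-(k₁:ℝ)*(δ₁+θ)) (-(1+(δ₁+θ))) (-(1+θ)) (-(1+(δ₂₃-θ))) =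
            (2:ℝ≥0∞)^(-(k₁:ℝ)*(δ₁+θ)) * (j₁:ℝ≥0∞)^(-(1+(δ₁+θ))) * (j₂:ℝ≥0∞)^(-(1+θ)) *
              (j₃:ℝ≥0∞)^(-(1+(δ₂₃-θ))) := by simp only [hfdef, hpdef, hqdef, hrdef]
        rw [← e1, ← e2]
        congr 1
        · congr 1
          · congr 1 <;> ring
          · congr 1 <;> ring
lemma factor (c d : ℝ) (W1 W2 W3 : ℕ → ℝ≥0∞) :
    (∑' (k₁ : ℕ), ∑' (k₂ : ℕ), ∑' (j₁ : ℕ), ∑' (j₂ : ℕ), ∑' (j₃ : ℕ),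
      (2:ℝ≥0∞)^(-(k₁:ℝ)*c) *
        ((if k₁ ≤ k₂ then (2:ℝ≥0∞)^(((k₁:ℝ)-(k₂:ℝ))*d) else 0) * (W1 j₁ * (W2 j₂ * W3 j₃))))
    = (∑' k:ℕ, (2:ℝ≥0∞)^(-(k:ℝ)*c)) * ((∑' m:ℕ, (2:ℝ≥0∞)^(-(m:ℝ)*d)) *
        ((∑' n, W1 n) * ((∑' n, W2 n) * (∑' n, W3 n)))) := by
  calc (∑' (k₁ : ℕ), ∑' (k₂ : ℕ), ∑' (j₁ : ℕ), ∑' (j₂ : ℕ), ∑' (j₃ : ℕ),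
      (2:ℝ≥0∞)^(-(k₁:ℝ)*c) *
        ((if k₁ ≤ k₂ then (2:ℝ≥0∞)^(((k₁:ℝ)-(k₂:ℝ))*d) else 0) * (W1 j₁ * (W2 j₂ * W3 j₃))))
      = ∑' (k₁ : ℕ), (2:ℝ≥0∞)^(-(k₁:ℝ)*c) *
          ((∑' (k₂ : ℕ), if k₁ ≤ k₂ then (2:ℝ≥0∞)^(((k₁:ℝ)-(k₂:ℝ))*d) else 0) *
            ((∑' n, W1 n) * ((∑' n, W2 n) * (∑' n, W3 n)))) := by
        simp only [ENNReal.tsum_mul_left, ENNReal.tsum_mul_right]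
    _ = ∑' (k₁ : ℕ), (2:ℝ≥0∞)^(-(k₁:ℝ)*c) *
          ((∑' m:ℕ, (2:ℝ≥0∞)^(-(m:ℝ)*d)) *
            ((∑' n, W1 n) * ((∑' n, W2 n) * (∑' n, W3 n)))) := by
        refine tsum_congr ?_
        intro k₁
        rw [ksum k₁ d]
    _ = _ := ENNReal.tsum_mul_right
end Stmt4Aux

open Stmt4Aux

/-- The summability estimate 𝒥₃(A) ≲ A^{-δ₀}: condition j₃ ≥ A (Lemma 3.1, (JJA-2)):
sum over `k₂ ≥ k₁ ≥ 0` and `j₁, j₂, j₃ ≥ 1` of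
`2^{-k₁δ₁} j₁^{-1-δ₁} j₂⁻¹ j₃⁻¹ (2^{-k₂}j₂⁻¹ + 2^{k₁-k₂}j₃⁻¹)^{δ₂₃} /
(2^{k₁} j₁ j₂ j₃⁻¹ + 2^{-k₁} j₁⁻¹ j₂⁻¹ j₃)^θ`. -/
theorem stmt4 (δ₁ δ₂₃ θ : ℝ) (hδ₁ : δ₁ ∈ Set.Ioc (0:ℝ) 1) (hδ₂₃ : δ₂₃ ∈ Set.Ioc (0:ℝ) 1)
    (hθ : 0 < θ) (hθ' : θ < min δ₁ δ₂₃) :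
    ∃ C : ℝ≥0∞, C ≠ ⊤ ∧ ∀ (A : ℝ), 1 ≤ A →
      (∑' k₁ : ℕ, ∑' k₂ : ℕ, ∑' j₁ : ℕ, ∑' j₂ : ℕ, ∑' j₃ : ℕ,
          if k₁ ≤ k₂ ∧ 1 ≤ j₁ ∧ 1 ≤ j₂ ∧ 1 ≤ j₃ ∧ A ≤ (j₃ : ℝ) then
            (2 : ℝ≥0∞) ^ (-(k₁ : ℝ) * δ₁) * ((j₁ : ℝ≥0∞)) ^ (-(1 + δ₁)) *
              ((j₂ : ℝ≥0∞))⁻¹ * ((j₃ : ℝ≥0∞))⁻¹ *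
              ((2 : ℝ≥0∞) ^ (-(k₂ : ℝ)) * ((j₂ : ℝ≥0∞))⁻¹ +
                  (2 : ℝ≥0∞) ^ ((k₁ : ℝ) - (k₂ : ℝ)) * ((j₃ : ℝ≥0∞))⁻¹) ^ δ₂₃ /
              ((2 : ℝ≥0∞) ^ ((k₁ : ℝ)) * (j₁ : ℝ≥0∞) * (j₂ : ℝ≥0∞) * ((j₃ : ℝ≥0∞))⁻¹ +
                  (2 : ℝ≥0∞) ^ (-(k₁ : ℝ)) * ((j₁ : ℝ≥0∞))⁻¹ * ((j₂ : ℝ≥0∞))⁻¹ *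
                    (j₃ : ℝ≥0∞)) ^ θ
          else 0)
        ≤ C * (ENNReal.ofReal A) ^ (-(min θ (min (δ₁ - θ) (δ₂₃ - θ)))) := by
  obtain ⟨hδ₁0, hδ₁1⟩ := hδ₁
  obtain ⟨hδ₂₃0, hδ₂₃1⟩ := hδ₂₃
  rw [lt_min_iff] at hθ'
  obtain ⟨hθδ₁, hθδ₂₃⟩ := hθ'
  have hθ1 : θ ≤ 1 := le_trans hθδ₂₃.le hδ₂₃1
  have hε₂0 : 0 < δ₂₃ - θ := by linarith
  have hε₂1 : δ₂₃ - θ ≤ 1 := by linarith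
  set G := ∑' m:ℕ, (2:ℝ≥0∞)^(-(m:ℝ)*δ₂₃) with hG
  set Γ₁ := ∑' k:ℕ, (2:ℝ≥0∞)^(-(k:ℝ)*(δ₁-θ)) with hΓ₁
  set Γ₂ := ∑' k:ℕ, (2:ℝ≥0∞)^(-(k:ℝ)*(δ₁+θ)) with hΓ₂
  set S1a := ∑' n, W (δ₁-θ) 1 n with hS1a
  set S2a := ∑' n, W (δ₂₃-θ) 1 n with hS2a
  set S1b := ∑' n, W (δ₁+θ) 1 n with hS1b
  set S2b := ∑' n, W θ 1 n with hS2b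
  set C := Γ₁ * (G * (S1a * (S2a * ENNReal.ofReal (1+1/θ))))
         + Γ₂ * (G * (S1b * (S2b * ENNReal.ofReal (1+1/(δ₂₃-θ))))) with hC
  refine ⟨C, ?_, ?_⟩
  · rw [hC]
    apply ENNReal.add_ne_top.2
    constructor
    · exact ENNReal.mul_ne_top (geom_ne_top (by linarith))
        (ENNReal.mul_ne_top (geom_ne_top hδ₂₃0)
          (ENNReal.mul_ne_top (tsum_W_ne_top (by linarith))
            (ENNReal.mul_ne_top (tsum_W_ne_top hε₂0) ENNReal.ofReal_ne_top)))
    · exact ENNReal.mul_ne_top (geom_ne_top (by linarith))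
        (ENNReal.mul_ne_top (geom_ne_top hδ₂₃0)
          (ENNReal.mul_ne_top (tsum_W_ne_top (by linarith))
            (ENNReal.mul_ne_top (tsum_W_ne_top hθ) ENNReal.ofReal_ne_top)))
  intro A hA
  have hbound : ∀ k₁ k₂ j₁ j₂ j₃ : ℕ,
      (if k₁ ≤ k₂ ∧ 1 ≤ j₁ ∧ 1 ≤ j₂ ∧ 1 ≤ j₃ ∧ A ≤ (j₃ : ℝ) then
            (2 : ℝ≥0∞) ^ (-(k₁ : ℝ) * δ₁) * ((j₁ : ℝ≥0∞)) ^ (-(1 + δ₁)) *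
              ((j₂ : ℝ≥0∞))⁻¹ * ((j₃ : ℝ≥0∞))⁻¹ *
              ((2 : ℝ≥0∞) ^ (-(k₂ : ℝ)) * ((j₂ : ℝ≥0∞))⁻¹ +
                  (2 : ℝ≥0∞) ^ ((k₁ : ℝ) - (k₂ : ℝ)) * ((j₃ : ℝ≥0∞))⁻¹) ^ δ₂₃ /
              ((2 : ℝ≥0∞) ^ ((k₁ : ℝ)) * (j₁ : ℝ≥0∞) * (j₂ : ℝ≥0∞) * ((j₃ : ℝ≥0∞))⁻¹ +
                  (2 : ℝ≥0∞) ^ (-(k₁ : ℝ)) * ((j₁ : ℝ≥0∞))⁻¹ * ((j₂ : ℝ≥0∞))⁻¹ *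
                    (j₃ : ℝ≥0∞)) ^ θ
          else 0)
      ≤ (2:ℝ≥0∞)^(-(k₁:ℝ)*(δ₁-θ)) *
          ((if k₁ ≤ k₂ then (2:ℝ≥0∞)^(((k₁:ℝ)-(k₂:ℝ))*δ₂₃) else 0) *
            (W (δ₁-θ) 1 j₁ * (W (δ₂₃-θ) 1 j₂ * W θ A j₃)))
        + (2:ℝ≥0∞)^(-(k₁:ℝ)*(δ₁+θ)) *
          ((if k₁ ≤ k₂ then (2:ℝ≥0∞)^(((k₁:ℝ)-(k₂:ℝ))*δ₂₃) else 0) *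
            (W (δ₁+θ) 1 j₁ * (W θ 1 j₂ * W (δ₂₃-θ) A j₃))) := by
    intro k₁ k₂ j₁ j₂ j₃
    by_cases h : k₁ ≤ k₂ ∧ 1 ≤ j₁ ∧ 1 ≤ j₂ ∧ 1 ≤ j₃ ∧ A ≤ (j₃ : ℝ)
    · rw [if_pos h]
      obtain ⟨hk, h1, h2, h3, hA3⟩ := h
      have hc1 : (1:ℝ) ≤ (j₁:ℝ) := by exact_mod_cast h1
      have hc2 : (1:ℝ) ≤ (j₂:ℝ) := by exact_mod_cast h2
      have w1 : W (δ₁-θ) 1 j₁ = (j₁:ℝ≥0∞)^(-(1+(δ₁-θ))) := if_pos hc1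
      have w2 : W (δ₂₃-θ) 1 j₂ = (j₂:ℝ≥0∞)^(-(1+(δ₂₃-θ))) := if_pos hc2
      have w3 : W θ A j₃ = (j₃:ℝ≥0∞)^(-(1+θ)) := if_pos hA3
      have w4 : W (δ₁+θ) 1 j₁ = (j₁:ℝ≥0∞)^(-(1+(δ₁+θ))) := if_pos hc1
      have w5 : W θ 1 j₂ = (j₂:ℝ≥0∞)^(-(1+θ)) := if_pos hc2
      have w6 : W (δ₂₃-θ) A j₃ = (j₃:ℝ≥0∞)^(-(1+(δ₂₃-θ))) := if_pos hA3
      rw [w1, w2, w3, w4, w5, w6, if_pos hk]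
      refine le_trans (pointwise hδ₂₃0 hδ₂₃1 hθ k₁ k₂ j₁ j₂ j₃ h1 h2 h3) (le_of_eq ?_)
      ring
    · rw [if_neg h]
      exact bot_le
  calc (∑' k₁ : ℕ, ∑' k₂ : ℕ, ∑' j₁ : ℕ, ∑' j₂ : ℕ, ∑' j₃ : ℕ,
          if k₁ ≤ k₂ ∧ 1 ≤ j₁ ∧ 1 ≤ j₂ ∧ 1 ≤ j₃ ∧ A ≤ (j₃ : ℝ) then
            (2 : ℝ≥0∞) ^ (-(k₁ : ℝ) * δ₁) * ((j₁ : ℝ≥0∞)) ^ (-(1 + δ₁)) *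
              ((j₂ : ℝ≥0∞))⁻¹ * ((j₃ : ℝ≥0∞))⁻¹ *
              ((2 : ℝ≥0∞) ^ (-(k₂ : ℝ)) * ((j₂ : ℝ≥0∞))⁻¹ +
                  (2 : ℝ≥0∞) ^ ((k₁ : ℝ) - (k₂ : ℝ)) * ((j₃ : ℝ≥0∞))⁻¹) ^ δ₂₃ /
              ((2 : ℝ≥0∞) ^ ((k₁ : ℝ)) * (j₁ : ℝ≥0∞) * (j₂ : ℝ≥0∞) * ((j₃ : ℝ≥0∞))⁻¹ +
                  (2 : ℝ≥0∞) ^ (-(k₁ : ℝ)) * ((j₁ : ℝ≥0∞))⁻¹ * ((j₂ : ℝ≥0∞))⁻¹ *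
                    (j₃ : ℝ≥0∞)) ^ θ
          else 0)
      ≤ (∑' k₁ : ℕ, ∑' k₂ : ℕ, ∑' j₁ : ℕ, ∑' j₂ : ℕ, ∑' j₃ : ℕ,
          ((2:ℝ≥0∞)^(-(k₁:ℝ)*(δ₁-θ)) *
            ((if k₁ ≤ k₂ then (2:ℝ≥0∞)^(((k₁:ℝ)-(k₂:ℝ))*δ₂₃) else 0) *
              (W (δ₁-θ) 1 j₁ * (W (δ₂₃-θ) 1 j₂ * W θ A j₃)))
          + (2:ℝ≥0∞)^(-(k₁:ℝ)*(δ₁+θ)) *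
            ((if k₁ ≤ k₂ then (2:ℝ≥0∞)^(((k₁:ℝ)-(k₂:ℝ))*δ₂₃) else 0) *
              (W (δ₁+θ) 1 j₁ * (W θ 1 j₂ * W (δ₂₃-θ) A j₃))))) := by
        refine ENNReal.tsum_le_tsum fun k₁ => ENNReal.tsum_le_tsum fun k₂ =>
          ENNReal.tsum_le_tsum fun j₁ => ENNReal.tsum_le_tsum fun j₂ =>
          ENNReal.tsum_le_tsum fun j₃ => hbound k₁ k₂ j₁ j₂ j₃
    _ = Γ₁ * (G * (S1a * (S2a * (∑' n, W θ A n))))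
        + Γ₂ * (G * (S1b * (S2b * (∑' n, W (δ₂₃-θ) A n)))) := by
        simp only [ENNReal.tsum_add]
        rw [factor (δ₁-θ) δ₂₃ (W (δ₁-θ) 1) (W (δ₂₃-θ) 1) (W θ A),
          factor (δ₁+θ) δ₂₃ (W (δ₁+θ) 1) (W θ 1) (W (δ₂₃-θ) A)]
    _ ≤ C * (ENNReal.ofReal A) ^ (-(min θ (min (δ₁ - θ) (δ₂₃ - θ)))) := by
        have hA1 : (1:ℝ≥0∞) ≤ ENNReal.ofReal A := ENNReal.one_le_ofReal.2 hA
        have hd1 : -θ ≤ -(min θ (min (δ₁ - θ) (δ₂₃ - θ))) := by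
          simp only [neg_le_neg_iff]
          exact min_le_left _ _
        have hd2 : -(δ₂₃-θ) ≤ -(min θ (min (δ₁ - θ) (δ₂₃ - θ))) := by
          simp only [neg_le_neg_iff]
          exact le_trans (min_le_right _ _) (min_le_right _ _)
        have t1 : (∑' n, W θ A n)
            ≤ ENNReal.ofReal (1+1/θ) * (ENNReal.ofReal A) ^ (-(min θ (min (δ₁-θ) (δ₂₃-θ)))) :=
          le_trans (tsum_W_le hθ hθ1 A hA)
            (mul_le_mul_right (ENNReal.rpow_le_rpow_of_exponent_le hA1 hd1) _)
        have t2 : (∑' n, W (δ₂₃-θ) A n)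
            ≤ ENNReal.ofReal (1+1/(δ₂₃-θ)) *
                (ENNReal.ofReal A) ^ (-(min θ (min (δ₁-θ) (δ₂₃-θ)))) :=
          le_trans (tsum_W_le hε₂0 hε₂1 A hA)
            (mul_le_mul_right (ENNReal.rpow_le_rpow_of_exponent_le hA1 hd2) _)
        calc Γ₁ * (G * (S1a * (S2a * (∑' n, W θ A n))))
            + Γ₂ * (G * (S1b * (S2b * (∑' n, W (δ₂₃-θ) A n))))
            ≤ Γ₁ * (G * (S1a * (S2a * (ENNReal.ofReal (1+1/θ) *
                  (ENNReal.ofReal A) ^ (-(min θ (min (δ₁-θ) (δ₂₃-θ))))))))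
              + Γ₂ * (G * (S1b * (S2b * (ENNReal.ofReal (1+1/(δ₂₃-θ)) *
                  (ENNReal.ofReal A) ^ (-(min θ (min (δ₁-θ) (δ₂₃-θ)))))))) := by
              exact add_le_add
                (mul_le_mul_right (mul_le_mul_right (mul_le_mul_right
                  (mul_le_mul_right t1 _) _) _) _)
                (mul_le_mul_right (mul_le_mul_right (mul_le_mul_right
                  (mul_le_mul_right t2 _) _) _) _)
          _ = C * (ENNReal.ofReal A) ^ (-(min θ (min (δ₁ - θ) (δ₂₃ - θ)))) := by
              rw [hC]; ring
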